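/- arXiv:2011.12355 — 4 statements merged into one kernel-verified Lean document; each statement's English description precedes it below -/
import Mathlib

section
/- Let H be a real inner product space (e.g. ℝ^n), and let l_m : H → ℝ and l_s : H → ℝ be everywhere differentiable functions such that l_m is convex and its gradient is β-Lipschitz for some β > 0, and such that ‖∇l_m(θ)‖ ≤ G and ‖∇l_s(θ)‖ ≤ G for all θ, where G > 0. Let ε > 0 and set the learning rate η = ε / (β G²). Then for every parameter vector θ satisfying ⟨∇l_m(θ), ∇l_s(θ)⟩ > ε, one step of gradient descent on the self-supervised loss strictly decreases the main loss: l_m(θ − η ∇l_s(θ)) < l_m(θ). -/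
open scoped RealInnerProductSpace

/-- Theorem 1 (test-time training guarantee), with learning rate η = ε/(βG²):
if the main and self-supervised gradients are positively correlated (inner product > ε),
one step of gradient descent on the self-supervised loss strictly decreases the main loss. -/
theorem lethean_stmt0
    {H : Type*} [NormedAddCommGroup H] [InnerProductSpace ℝ H] [CompleteSpace H]
    (lm ls : H → ℝ) (gm gs : H → H)
    (hgm : ∀ θ : H, HasGradientAt lm (gm θ) θ)
    (hgs : ∀ θ : H, HasGradientAt ls (gs θ) θ)
    (hconv : ConvexOn ℝ Set.univ lm)
    (β : ℝ) (hβ : 0 < β)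
    (hlip : LipschitzWith β.toNNReal gm)
    (G : ℝ) (hG : 0 < G)
    (hbm : ∀ θ : H, ‖gm θ‖ ≤ G)
    (hbs : ∀ θ : H, ‖gs θ‖ ≤ G)
    (ε : ℝ) (hε : 0 < ε)
    (η : ℝ) (hη : η = ε / (β * G ^ 2)) :
    ∀ θ : H, ε < ⟪gm θ, gs θ⟫ → lm (θ - η • gs θ) < lm θ := by
  intro θ hcorr
  have hG2 : 0 < β * G ^ 2 := by positivity
  have hη0 : 0 < η := by rw [hη]; positivity
  set v : H := -(η • gs θ) with hv
  -- derivative of the restriction of lm to the line through θ with direction v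
  have hline : ∀ t : ℝ, HasDerivAt (fun s : ℝ => θ + s • v) v t := by
    intro t
    simpa using (hasDerivAt_id t).smul_const v |>.const_add θ
  have hφ : ∀ t : ℝ, HasDerivAt (fun s : ℝ => lm (θ + s • v)) ⟪gm (θ + t • v), v⟫ t := by
    intro t
    have h1 := ((hgm (θ + t • v)).hasFDerivAt).comp_hasDerivAt t (hline t)
    simp only [InnerProductSpace.toDual_apply_apply] at h1
    exact h1
  -- auxiliary function whose nonpositive derivative encodes the descent lemma
  set ψ : ℝ → ℝ := fun t => lm (θ + t • v) - t * ⟪gm θ, v⟫ - t ^ 2 * (β / 2 * ‖v‖ ^ 2)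
    with hψdef
  have hψ : ∀ t : ℝ, HasDerivAt ψ
      (⟪gm (θ + t • v), v⟫ - ⟪gm θ, v⟫ - 2 * t * (β / 2 * ‖v‖ ^ 2)) t := by
    intro t
    have h := ((hφ t).sub ((hasDerivAt_id t).mul_const (⟪gm θ, v⟫ : ℝ))).sub
      ((hasDerivAt_pow 2 t).mul_const (β / 2 * ‖v‖ ^ 2))
    exact h.congr_deriv (by rw [show (2:ℕ) - 1 = 1 from rfl]; push_cast; ring)
  have hψ' : ∀ t ∈ Set.Icc (0 : ℝ) 1, deriv ψ t ≤ 0 := by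
    intro t ht
    rw [(hψ t).deriv]
    have hd : ⟪gm (θ + t • v) - gm θ, v⟫ ≤ β * (t * ‖v‖) * ‖v‖ := by
      calc ⟪gm (θ + t • v) - gm θ, v⟫ ≤ ‖gm (θ + t • v) - gm θ‖ * ‖v‖ :=
            real_inner_le_norm _ _
        _ ≤ β * (t * ‖v‖) * ‖v‖ := by
            apply mul_le_mul_of_nonneg_right _ (norm_nonneg v)
            have := hlip.dist_le_mul (θ + t • v) θ
            rw [dist_eq_norm, dist_eq_norm] at this
            have h2 : ‖θ + t • v - θ‖ = t * ‖v‖ := by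
              rw [add_sub_cancel_left, norm_smul, Real.norm_eq_abs, abs_of_nonneg ht.1]
            rw [← dist_eq_norm, dist_eq_norm, h2] at this
            calc ‖gm (θ + t • v) - gm θ‖ ≤ β.toNNReal * (t * ‖v‖) := this
              _ = β * (t * ‖v‖) := by
                  rw [Real.coe_toNNReal _ hβ.le]
              _ ≤ β * (t * ‖v‖) * 1 := by ring_nf; rfl
              _ = β * (t * ‖v‖) := by ring
    have hsplit : ⟪gm (θ + t • v), v⟫ - ⟪gm θ, v⟫ = ⟪gm (θ + t • v) - gm θ, v⟫ := by
      rw [inner_sub_left]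
    rw [hsplit] at *
    nlinarith [hd]
  have hmono : ψ 1 ≤ ψ 0 := by
    have hcont : ContinuousOn ψ (Set.Icc (0 : ℝ) 1) :=
      fun t _ => ((hψ t).differentiableAt.continuousAt).continuousWithinAt
    have hdiff : DifferentiableOn ℝ ψ (interior (Set.Icc (0 : ℝ) 1)) :=
      fun t _ => ((hψ t).differentiableAt).differentiableWithinAt
    have := antitoneOn_of_deriv_nonpos (convex_Icc (0 : ℝ) 1) hcont hdiff
      (fun t ht => hψ' t (interior_subset ht))
    exact this (Set.left_mem_Icc.2 zero_le_one) (Set.right_mem_Icc.2 zero_le_one) zero_le_one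
  -- unpack ψ 1 ≤ ψ 0 into the descent inequality
  have hdescent : lm (θ + v) ≤ lm θ + ⟪gm θ, v⟫ + β / 2 * ‖v‖ ^ 2 := by
    have h0 : ψ 0 = lm θ := by simp [hψdef]
    have h1 : ψ 1 = lm (θ + v) - ⟪gm θ, v⟫ - β / 2 * ‖v‖ ^ 2 := by
      simp [hψdef]
    rw [h0, h1] at hmono
    linarith
  -- conclude
  have hvθ : θ - η • gs θ = θ + v := by rw [hv]; abel
  rw [hvθ]
  have hinner : ⟪gm θ, v⟫ = -(η * ⟪gm θ, gs θ⟫) := by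
    rw [hv, inner_neg_right, real_inner_smul_right]
  have hnv : ‖v‖ = η * ‖gs θ‖ := by
    rw [hv, norm_neg, norm_smul, Real.norm_eq_abs, abs_of_pos hη0]
  have hvG : ‖v‖ ^ 2 ≤ η ^ 2 * G ^ 2 := by
    rw [hnv, mul_pow]
    have h : ‖gs θ‖ ^ 2 ≤ G ^ 2 := by nlinarith [norm_nonneg (gs θ), hbs θ]
    exact mul_le_mul_of_nonneg_left h (sq_nonneg η)
  have hstep : β / 2 * ‖v‖ ^ 2 ≤ η * ε / 2 := by
    have : β / 2 * (η ^ 2 * G ^ 2) = η * ε / 2 := by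
      rw [hη]; field_simp
    nlinarith
  have : lm (θ + v) ≤ lm θ - η * ⟪gm θ, gs θ⟫ + η * ε / 2 := by
    rw [hinner] at hdescent; linarith
  nlinarith [mul_lt_mul_of_pos_left hcorr hη0]
end

section
/- Let H be a real inner product space (e.g. ℝ^n), and let l_m : H → ℝ and l_s : H → ℝ be everywhere differentiable functions such that l_m is convex and its gradient is β-Lipschitz for some β > 0, and such that ‖∇l_m(θ)‖ ≤ G and ‖∇l_s(θ)‖ ≤ G for all θ, where 0 < G < 2. Let ε > 0 and set the learning rate η = ε / (β G). Then for every parameter vector θ satisfying ⟨∇l_m(θ), ∇l_s(θ)⟩ > ε, one step of gradient descent on the self-supervised loss strictly decreases the main loss: l_m(θ − η ∇l_s(θ)) < l_m(θ). -/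
open scoped RealInnerProductSpace

lemma descent_lemma
    {H : Type*} [NormedAddCommGroup H] [InnerProductSpace ℝ H] [CompleteSpace H]
    (f : H → ℝ) (g : H → H) (hg : ∀ θ : H, HasGradientAt f (g θ) θ)
    (β : ℝ) (hβ : 0 < β) (hlip : LipschitzWith β.toNNReal g)
    (x v : H) : f (x + v) ≤ f x + ⟪g x, v⟫ + β / 2 * ‖v‖ ^ 2 := by
  set φ : ℝ → ℝ := fun t => f (x + t • v) - t * ⟪g x, v⟫ - β * t ^ 2 / 2 * ‖v‖ ^ 2 with hφ
  have hline : ∀ t : ℝ, HasDerivAt (fun t : ℝ => x + t • v) v t := by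
    intro t
    simpa using ((hasDerivAt_id t).smul_const v).const_add x
  have hφ' : ∀ t : ℝ, HasDerivAt φ (⟪g (x + t • v), v⟫ - ⟪g x, v⟫ - β * t * ‖v‖ ^ 2) t := by
    intro t
    have h1 : HasDerivAt (fun t : ℝ => f (x + t • v)) ⟪g (x + t • v), v⟫ t := by
      have := ((hg (x + t • v)).hasFDerivAt).comp_hasDerivAt t (hline t)
      exact this
    have h2 : HasDerivAt (fun t : ℝ => t * ⟪g x, v⟫) ⟪g x, v⟫ t := by
      simpa using (hasDerivAt_id t).mul_const (⟪g x, v⟫)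
    have h3 : HasDerivAt (fun t : ℝ => β * t ^ 2 / 2 * ‖v‖ ^ 2) (β * t * ‖v‖ ^ 2) t := by
      have : HasDerivAt (fun t : ℝ => t ^ 2) (2 * t) t := by
        simpa using hasDerivAt_pow 2 t
      have := ((this.const_mul β).div_const 2).mul_const (‖v‖ ^ 2)
      exact this.congr_deriv (by ring)
    exact (h1.sub h2).sub h3
  have hderiv_nonpos : ∀ t ∈ Set.Icc (0:ℝ) 1,
      ⟪g (x + t • v), v⟫ - ⟪g x, v⟫ - β * t * ‖v‖ ^ 2 ≤ 0 := by
    intro t ht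
    have h1 : ⟪g (x + t • v) - g x, v⟫ ≤ ‖g (x + t • v) - g x‖ * ‖v‖ :=
      real_inner_le_norm _ _
    have h2 : ‖g (x + t • v) - g x‖ ≤ β * (t * ‖v‖) := by
      calc ‖g (x + t • v) - g x‖ = dist (g (x + t • v)) (g x) := (dist_eq_norm _ _).symm
        _ ≤ β.toNNReal * dist (x + t • v) x := hlip.dist_le_mul _ _
        _ = β * ‖t • v‖ := by
            rw [Real.coe_toNNReal _ hβ.le, dist_eq_norm, add_sub_cancel_left]
        _ = β * (t * ‖v‖) := by rw [norm_smul, Real.norm_of_nonneg ht.1]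
    have hiv : ⟪g (x + t • v), v⟫ - ⟪g x, v⟫ = ⟪g (x + t • v) - g x, v⟫ := by
      rw [inner_sub_left]
    rw [hiv]
    have : ⟪g (x + t • v) - g x, v⟫ ≤ β * (t * ‖v‖) * ‖v‖ :=
      h1.trans (mul_le_mul_of_nonneg_right h2 (norm_nonneg v))
    nlinarith [this]
  have hcont : ContinuousOn φ (Set.Icc (0:ℝ) 1) :=
    fun t _ => ((hφ' t).continuousAt).continuousWithinAt
  have hanti : AntitoneOn φ (Set.Icc (0:ℝ) 1) := by
    apply antitoneOn_of_deriv_nonpos (convex_Icc 0 1) hcont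
    · intro t ht
      exact ((hφ' t).differentiableAt).differentiableWithinAt
    · intro t ht
      rw [interior_Icc] at ht
      rw [(hφ' t).deriv]
      exact hderiv_nonpos t ⟨ht.1.le, ht.2.le⟩
  have := hanti (Set.left_mem_Icc.mpr zero_le_one) (Set.right_mem_Icc.mpr zero_le_one) zero_le_one
  simp only [hφ, one_smul, zero_smul, add_zero, one_mul, one_pow, zero_mul, zero_pow,
    mul_zero, sub_zero, zero_div] at this
  linarith

/-- Theorem 1 exactly as stated in the paper, with learning rate η = ε/(βG) and
the additional hypothesis G < 2: if the main and self-supervised gradients are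
positively correlated (inner product > ε), one step of gradient descent on the
self-supervised loss strictly decreases the main loss. -/
theorem lethean_stmt1
    {H : Type*} [NormedAddCommGroup H] [InnerProductSpace ℝ H] [CompleteSpace H]
    (lm ls : H → ℝ) (gm gs : H → H)
    (hgm : ∀ θ : H, HasGradientAt lm (gm θ) θ)
    (hgs : ∀ θ : H, HasGradientAt ls (gs θ) θ)
    (hconv : ConvexOn ℝ Set.univ lm)
    (β : ℝ) (hβ : 0 < β)
    (hlip : LipschitzWith β.toNNReal gm)
    (G : ℝ) (hG : 0 < G) (hG2 : G < 2)
    (hbm : ∀ θ : H, ‖gm θ‖ ≤ G)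
    (hbs : ∀ θ : H, ‖gs θ‖ ≤ G)
    (ε : ℝ) (hε : 0 < ε)
    (η : ℝ) (hη : η = ε / (β * G)) :
    ∀ θ : H, ε < ⟪gm θ, gs θ⟫ → lm (θ - η • gs θ) < lm θ := by
  intro θ hcorr
  have hηpos : 0 < η := by
    rw [hη]; positivity
  have key := descent_lemma lm gm hgm β hβ hlip θ (-(η • gs θ))
  rw [← sub_eq_add_neg] at key
  have hip : ⟪gm θ, -(η • gs θ)⟫ = -(η * ⟪gm θ, gs θ⟫) := by
    rw [inner_neg_right, real_inner_smul_right]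
  have hnorm : ‖-(η • gs θ)‖ ^ 2 = η ^ 2 * ‖gs θ‖ ^ 2 := by
    rw [norm_neg, norm_smul, mul_pow, Real.norm_of_nonneg hηpos.le]
  rw [hip, hnorm] at key
  have hns : ‖gs θ‖ ^ 2 ≤ G ^ 2 := by
    have := hbs θ
    nlinarith [norm_nonneg (gs θ)]
  have h1 : β / 2 * (η ^ 2 * ‖gs θ‖ ^ 2) ≤ β / 2 * (η ^ 2 * G ^ 2) := by
    have : (0:ℝ) ≤ β / 2 * η ^ 2 := by positivity
    nlinarith
  have hη2 : β / 2 * (η ^ 2 * G ^ 2) = ε ^ 2 / (2 * β) := by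
    rw [hη]; field_simp
  have hηε : η * ε = ε ^ 2 / (β * G) := by
    rw [hη]; field_simp
  have hlt : η * ε > ε ^ 2 / (2 * β) := by
    rw [hηε, gt_iff_lt, div_lt_div_iff₀ (by positivity) (by positivity)]
    nlinarith [mul_pos (mul_pos (pow_pos hε 2) hβ) (sub_pos.mpr hG2)]
  have h2 : η * ε < η * ⟪gm θ, gs θ⟫ := by
    exact mul_lt_mul_of_pos_left hcorr hηpos
  linarith [key, h1]
end

section
/- Let H be a real inner product space, and let l_m : H → ℝ and l_s : H → ℝ be everywhere differentiable functions such that the gradient of l_m is β-Lipschitz for some β > 0 and ‖∇l_s(θ)‖ ≤ G for all θ, where G > 0. Let ε > 0 and η = ε / (β G²). Then for every θ with ⟨∇l_m(θ), ∇l_s(θ)⟩ > ε, the test-time training step achieves a quantitative decrease of the main loss: l_m(θ) − l_m(θ − η ∇l_s(θ)) > ε² / (2 β G²). -/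
open scoped RealInnerProductSpace

/-- Quantitative form of the decrease in Theorem 1, with learning rate η = ε/(βG²):
the test-time training step decreases the main loss by more than ε²/(2βG²). -/
theorem lethean_stmt4
    {H : Type*} [NormedAddCommGroup H] [InnerProductSpace ℝ H] [CompleteSpace H]
    (lm ls : H → ℝ) (gm gs : H → H)
    (hgm : ∀ θ : H, HasGradientAt lm (gm θ) θ)
    (hgs : ∀ θ : H, HasGradientAt ls (gs θ) θ)
    (β : ℝ) (hβ : 0 < β)
    (hlip : LipschitzWith β.toNNReal gm)
    (G : ℝ) (hG : 0 < G)
    (hbs : ∀ θ : H, ‖gs θ‖ ≤ G)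
    (ε : ℝ) (hε : 0 < ε)
    (η : ℝ) (hη : η = ε / (β * G ^ 2)) :
    ∀ θ : H, ε < ⟪gm θ, gs θ⟫ →
      ε ^ 2 / (2 * β * G ^ 2) < lm θ - lm (θ - η • gs θ) := by
  intro θ hinner
  have hG2 : (0:ℝ) < β * G ^ 2 := by positivity
  have hηpos : 0 < η := by rw [hη]; positivity
  set v : H := -η • gs θ with hv
  have hpath : ∀ t : ℝ, HasDerivAt (fun t : ℝ => θ + t • v) v t := by
    intro t
    simpa using ((hasDerivAt_id t).smul_const v).const_add θ
  have hderiv : ∀ t : ℝ, HasDerivAt (fun t : ℝ => lm (θ + t • v))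
      ⟪gm (θ + t • v), v⟫ t := by
    intro t
    have := ((hgm (θ + t • v)).hasFDerivAt).comp_hasDerivAt t (hpath t)
    exact this
  have hcont : Continuous fun t : ℝ => ⟪gm (θ + t • v), v⟫ := by
    apply Continuous.inner
    · exact hlip.continuous.comp (by continuity)
    · exact continuous_const
  -- FTC
  have hFTC : ∫ t in (0:ℝ)..1, ⟪gm (θ + t • v), v⟫ =
      lm (θ + v) - lm θ := by
    have := intervalIntegral.integral_eq_sub_of_hasDerivAt
      (fun t _ => hderiv t) (hcont.intervalIntegrable 0 1)
    simpa using this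
  -- pointwise bound
  have hbound : ∀ t ∈ Set.Icc (0:ℝ) 1,
      ⟪gm (θ + t • v), v⟫ ≤ ⟪gm θ, v⟫ + β * t * ‖v‖ ^ 2 := by
    intro t ht
    have h1 : ⟪gm (θ + t • v), v⟫ - ⟪gm θ, v⟫ = ⟪gm (θ + t • v) - gm θ, v⟫ := by
      rw [inner_sub_left]
    have h2 : ⟪gm (θ + t • v) - gm θ, v⟫ ≤ ‖gm (θ + t • v) - gm θ‖ * ‖v‖ :=
      real_inner_le_norm _ _
    have h3 : ‖gm (θ + t • v) - gm θ‖ ≤ β * (t * ‖v‖) := by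
      have := hlip.dist_le_mul (θ + t • v) θ
      rw [Real.coe_toNNReal β hβ.le] at this
      simpa [dist_eq_norm, norm_smul, abs_of_nonneg ht.1, mul_assoc] using this
    nlinarith [norm_nonneg v, ht.1]
  -- integrate bound
  have hIle : lm (θ + v) - lm θ ≤ ⟪gm θ, v⟫ + β * ‖v‖ ^ 2 / 2 := by
    rw [← hFTC]
    have hcont2 : Continuous fun t : ℝ => ⟪gm θ, v⟫ + β * t * ‖v‖ ^ 2 :=
      continuous_const.add (((continuous_const.mul continuous_id).mul continuous_const))
    have hmono : (∫ t in (0:ℝ)..1, ⟪gm (θ + t • v), v⟫) ≤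
        ∫ t in (0:ℝ)..1, (⟪gm θ, v⟫ + β * t * ‖v‖ ^ 2) :=
      intervalIntegral.integral_mono_on (by norm_num : (0:ℝ) ≤ 1)
        (hcont.intervalIntegrable 0 1) (hcont2.intervalIntegrable 0 1) hbound
    have hcalc : ∫ t in (0:ℝ)..1, (⟪gm θ, v⟫ + β * t * ‖v‖ ^ 2) =
        ⟪gm θ, v⟫ + β * ‖v‖ ^ 2 / 2 := by
      have h1 : ∫ t in (0:ℝ)..1, (⟪gm θ, v⟫ + β * t * ‖v‖ ^ 2)
          = ∫ t in (0:ℝ)..1, (⟪gm θ, v⟫ + (β * ‖v‖ ^ 2) * t) := by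
        congr 1; ext t; ring
      rw [h1, intervalIntegral.integral_add intervalIntegrable_const
        (intervalIntegral.intervalIntegrable_id.const_mul _)]
      rw [intervalIntegral.integral_const_mul, integral_id]
      simp
      ring
    calc ∫ t in (0:ℝ)..1, ⟪gm (θ + t • v), v⟫
        ≤ ∫ t in (0:ℝ)..1, (⟪gm θ, v⟫ + β * t * ‖v‖ ^ 2) := hmono
      _ = _ := hcalc
  -- arithmetic
  have hinv : ⟪gm θ, v⟫ = -η * ⟪gm θ, gs θ⟫ := by
    simp [hv, inner_smul_right]
  have hnv : ‖v‖ ^ 2 ≤ η ^ 2 * G ^ 2 := by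
    have h1 : ‖v‖ = η * ‖gs θ‖ := by
      rw [hv, norm_smul, Real.norm_eq_abs, abs_neg, abs_of_pos hηpos]
    rw [h1, mul_pow]
    have h2 := pow_le_pow_left₀ (norm_nonneg (gs θ)) (hbs θ) 2
    nlinarith [sq_nonneg η]
  have h4 : -η * ⟪gm θ, gs θ⟫ < -η * ε := by nlinarith
  have h5 : β * ‖v‖ ^ 2 / 2 ≤ β * (η ^ 2 * G ^ 2) / 2 := by nlinarith
  have hkey : η * (β * G ^ 2) = ε := by
    rw [hη]; exact div_mul_cancel₀ ε hG2.ne'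
  have hηG : β * (η ^ 2 * G ^ 2) / 2 = η * ε / 2 := by
    linear_combination (η / 2) * hkey
  have hfinal : lm (θ + v) - lm θ < -(η * ε) / 2 := by
    have h6 := hIle
    rw [hinv] at h6
    linarith
  have heq : θ + v = θ - η • gs θ := by
    rw [hv, neg_smul, ← sub_eq_add_neg]
  rw [heq] at hfinal
  have hgoal : ε ^ 2 / (2 * β * G ^ 2) = η * ε / 2 := by
    rw [div_eq_iff (by positivity : (2:ℝ) * β * G ^ 2 ≠ 0)]
    linear_combination -ε * hkey
  rw [hgoal]
  linarith
end

section
/- Let H be a real inner product space, and let l_m : H → ℝ and l_s : H → ℝ be everywhere differentiable functions such that the gradient of l_m is β-Lipschitz for some β > 0 and ‖∇l_s(θ)‖ ≤ G for all θ, where G > 0. Let ε > 0. Then for every θ with ⟨∇l_m(θ), ∇l_s(θ)⟩ < −ε and every learning rate η satisfying 0 < η < 2ε / (β G²), one step of gradient descent on the self-supervised loss strictly increases the main loss: l_m(θ − η ∇l_s(θ)) > l_m(θ). -/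
open scoped RealInnerProductSpace

lemma descent_lower
    {H : Type*} [NormedAddCommGroup H] [InnerProductSpace ℝ H] [CompleteSpace H]
    (f : H → ℝ) (g : H → H)
    (hg : ∀ θ : H, HasGradientAt f (g θ) θ)
    (β : ℝ) (hβ : 0 ≤ β) (hlip : LipschitzWith β.toNNReal g)
    (x v : H) :
    f x + ⟪g x, v⟫ - β / 2 * ‖v‖ ^ 2 ≤ f (x + v) := by
  set c : ℝ → H := fun t => x + t • v with hcdef
  have hc : ∀ t : ℝ, HasDerivAt c v t := by
    intro t
    simpa [hcdef] using (((hasDerivAt_id t).smul_const v).const_add x)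
  have hφ : ∀ t : ℝ, HasDerivAt (fun t => f (c t)) ⟪g (c t), v⟫ t := by
    intro t
    have h1 := (hg (c t)).hasFDerivAt.comp_hasDerivAt t (hc t)
    simp at h1; exact h1
  have hgc : Continuous fun t : ℝ => g (c t) := by
    exact hlip.continuous.comp (by continuity)
  have hcont : Continuous fun t : ℝ => ⟪g (c t), v⟫ :=
    hgc.inner continuous_const
  have key : f (x + v) - f x = ∫ t in (0:ℝ)..1, ⟪g (c t), v⟫ := by
    have := intervalIntegral.integral_eq_sub_of_hasDerivAt
      (f := fun t => f (c t)) (fun t _ => hφ t)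
      (hcont.intervalIntegrable 0 1)
    simpa [hcdef] using this.symm
  have pointwise : ∀ t ∈ Set.Icc (0:ℝ) 1,
      ⟪g x, v⟫ - β * ‖v‖ ^ 2 * t ≤ ⟪g (c t), v⟫ := by
    intro t ht
    have h1 : ⟪g x, v⟫ - ⟪g (c t), v⟫ = ⟪g x - g (c t), v⟫ := by
      rw [inner_sub_left]
    have h2 : ⟪g x - g (c t), v⟫ ≤ ‖g x - g (c t)‖ * ‖v‖ :=
      real_inner_le_norm _ _
    have h3 : ‖g x - g (c t)‖ ≤ β * ‖x - c t‖ := by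
      have := hlip.dist_le_mul x (c t)
      simpa [dist_eq_norm, Real.coe_toNNReal β hβ] using this
    have h4 : ‖x - c t‖ = t * ‖v‖ := by
      simp [hcdef, norm_smul, abs_of_nonneg ht.1]
    have h5 := mul_le_mul_of_nonneg_right h3 (norm_nonneg v)
    rw [h4] at h5
    have h6 : β * (t * ‖v‖) * ‖v‖ = β * ‖v‖ ^ 2 * t := by rw [pow_two]; ring
    linarith
  have int1 : IntervalIntegrable (fun t : ℝ => ⟪g (c t), v⟫)
      MeasureTheory.volume 0 1 := hcont.intervalIntegrable 0 1
  have int2 : IntervalIntegrable (fun t : ℝ => ⟪g x, v⟫ - β * ‖v‖ ^ 2 * t)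
      MeasureTheory.volume 0 1 := by
    apply Continuous.intervalIntegrable; continuity
  have mono := intervalIntegral.integral_mono_on (by norm_num) int2 int1 pointwise
  have calc2 : (∫ t in (0:ℝ)..1, (⟪g x, v⟫ - β * ‖v‖ ^ 2 * t))
      = ⟪g x, v⟫ - β / 2 * ‖v‖ ^ 2 := by
    rw [intervalIntegral.integral_sub (by apply Continuous.intervalIntegrable; continuity)
      (by apply Continuous.intervalIntegrable; continuity),
      intervalIntegral.integral_const_mul, integral_id]
    simp; ring
  rw [calc2] at mono
  linarith [key ▸ mono]

/-- Lethean attack rationale (equation (3) of the paper): if the main and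
self-supervised gradients are negatively correlated (inner product < −ε), then for
any learning rate 0 < η < 2ε/(βG²), one step of gradient descent on the
self-supervised loss strictly increases the main loss. -/
theorem lethean_stmt6
    {H : Type*} [NormedAddCommGroup H] [InnerProductSpace ℝ H] [CompleteSpace H]
    (lm ls : H → ℝ) (gm gs : H → H)
    (hgm : ∀ θ : H, HasGradientAt lm (gm θ) θ)
    (hgs : ∀ θ : H, HasGradientAt ls (gs θ) θ)
    (β : ℝ) (hβ : 0 < β)
    (hlip : LipschitzWith β.toNNReal gm)
    (G : ℝ) (hG : 0 < G)
    (hbs : ∀ θ : H, ‖gs θ‖ ≤ G)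
    (ε : ℝ) (hε : 0 < ε) :
    ∀ θ : H, ⟪gm θ, gs θ⟫ < -ε →
      ∀ η : ℝ, 0 < η → η < 2 * ε / (β * G ^ 2) →
        lm θ < lm (θ - η • gs θ) := by
  intro θ hneg η hη hη2
  have h := descent_lower lm gm hgm β hβ.le hlip θ (-(η • gs θ))
  have hsub : θ + -(η • gs θ) = θ - η • gs θ := by abel
  rw [hsub] at h
  have hip : ⟪gm θ, -(η • gs θ)⟫ = -η * ⟪gm θ, gs θ⟫ := by
    rw [inner_neg_right, real_inner_smul_right]; ring
  have hnrm : ‖-(η • gs θ)‖ ^ 2 = η ^ 2 * ‖gs θ‖ ^ 2 := by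
    rw [norm_neg, norm_smul]; simp [abs_of_pos hη]; ring
  rw [hip, hnrm] at h
  have hbound : ‖gs θ‖ ^ 2 ≤ G ^ 2 := by
    have := hbs θ; nlinarith [norm_nonneg (gs θ)]
  have hkey : η * β * G ^ 2 < 2 * ε := by
    have hden : 0 < β * G ^ 2 := by positivity
    calc η * β * G ^ 2 = η * (β * G ^ 2) := by ring
    _ < 2 * ε / (β * G ^ 2) * (β * G ^ 2) := by
        exact mul_lt_mul_of_pos_right hη2 hden
    _ = 2 * ε := by field_simp
  nlinarith [h, mul_lt_mul_of_pos_left hneg hη, mul_lt_mul_of_pos_left hkey hη,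
    mul_le_mul_of_nonneg_left hbound (by positivity : (0:ℝ) ≤ β / 2 * η ^ 2)]
end
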